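/- If a commutative ring R has a nonzero nilpotent element n, then 1, n, n+1 are pairwise distinct nonzero elements and the products 1·n, n·(n+1), (n+1)·1 are all nil clean; hence the nil clean divisor graph of R has girth 3. -/

import Mathlib

def IsNilCleanElem {R : Type*} [CommRing R] (x : R) : Prop :=
  ∃ e n : R, IsIdempotentElem e ∧ IsNilpotent n ∧ x = e + n

def NCVertex {R : Type*} [CommRing R] (x : R) : Prop :=
  x ≠ 0 ∧ ∃ y : R, y ≠ 0 ∧ y ≠ x ∧ IsNilCleanElem (x * y)

def NCAdj {R : Type*} [CommRing R] (x y : R) : Prop :=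
  x ≠ y ∧ NCVertex x ∧ NCVertex y ∧ IsNilCleanElem (x * y)

theorem stmt5 {R : Type*} [CommRing R] [Nontrivial R] (n : R)
    (hn : IsNilpotent n) (hn0 : n ≠ 0) :
    ((1 : R) ≠ n ∧ n ≠ n + 1 ∧ n + 1 ≠ (1 : R)) ∧
      ((1 : R) ≠ 0 ∧ n ≠ 0 ∧ n + 1 ≠ 0) ∧
      (IsNilCleanElem ((1 : R) * n) ∧ IsNilCleanElem (n * (n + 1)) ∧
        IsNilCleanElem ((n + 1) * 1)) := by
  refine ⟨⟨?_, ?_, ?_⟩, ⟨one_ne_zero, hn0, ?_⟩, ?_, ?_, ?_⟩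
  · rintro rfl
    obtain ⟨k, hk⟩ := hn
    simp at hk
  · simp
  · intro h
    exact hn0 (by linear_combination h)
  · intro h
    have : IsNilpotent (-n : R) := hn.neg
    rw [show (-n : R) = 1 by linear_combination -h] at this
    obtain ⟨k, hk⟩ := this
    simp at hk
  · exact ⟨0, n, by simp [IsIdempotentElem], hn, by simp⟩
  · exact ⟨0, n * (n + 1), by simp [IsIdempotentElem],
      (Commute.all _ _).isNilpotent_mul_right hn, by simp⟩
  · exact ⟨1, n, IsIdempotentElem.one, hn, by ring⟩
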